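/- Let 𝓡 be a domain of weak orders over H that is not contained in any objective indifferences domain, i.e., there exist R_α, R_β in 𝓡 and houses h_1, h_2 with h_1 I_α h_2 but h_1 P_β h_2. Then there exists a preference profile R in 𝓡^n and a tie-breaking profile ≻ such that TTC_≻(R) is Pareto dominated by another allocation. Hence objective indifferences domains are exactly the maximal domains on which all TTC_≻ mechanisms are Pareto efficient. -/

import Mathlib

open scoped Classical

namespace ShapleyScarf

/-- A weak preference relation: complete (total) and transitive, hence reflexive. -/
structure WeakOrder (H : Type*) where
  rel : H → H → Prop
  total : ∀ a b, rel a b ∨ rel b a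
  trans : ∀ a b c, rel a b → rel b c → rel a c

namespace WeakOrder
variable {H : Type*}
/-- Strict part `P` of a weak preference. -/
def P (R : WeakOrder H) (a b : H) : Prop := R.rel a b ∧ ¬ R.rel b a
/-- Indifference part `I` of a weak preference. -/
def I (R : WeakOrder H) (a b : H) : Prop := R.rel a b ∧ R.rel b a
end WeakOrder

/-- `lt` is a strict linear order on agents (a tie-breaking order). -/
def IsTieBreak {n : ℕ} (lt : Fin n → Fin n → Prop) : Prop :=
  (∀ a b, a ≠ b → lt a b ∨ lt b a) ∧ Transitive lt ∧ ∀ a, ¬ lt a a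

section Defs
variable {n : ℕ} {H : Type*} {B : Type*}

/-- Strict part of the tie-broken preference `P_{i,≻}`: `a` above `b` iff
`a P b`, or `a I b` and the owner of `a` comes before the owner of `b` in `≻_i`. -/
def tieBroken (w : Fin n ≃ H) (R : WeakOrder H) (lt : Fin n → Fin n → Prop) (a b : H) : Prop :=
  R.P a b ∨ (R.I a b ∧ lt (w.symm a) (w.symm b))

/-- The weak tie-broken relation `R_{i,≻}` (reflexive closure of the strict part). -/
def tieBrokenWeak (w : Fin n ≃ H) (R : WeakOrder H) (lt : Fin n → Fin n → Prop)
    (a b : H) : Prop :=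
  a = b ∨ tieBroken w R lt a b

/-- The owner (in `S`) of the `pref`-best house among the endowments of the
remaining agents `S`; the agent with this endowment is whom `i` points at. -/
noncomputable def point (w : Fin n ≃ H) (pref : H → H → Prop) (S : Finset (Fin n))
    (i : Fin n) : Fin n :=
  if h : (S.filter fun m => ∀ j ∈ S, j = m ∨ pref (w m) (w j)).Nonempty then
    (S.filter fun m => ∀ j ∈ S, j = m ∨ pref (w m) (w j)).min' h
  else i

/-- The agents of `S` lying on some trading cycle of the pointing map. -/
noncomputable def cycleAgents (w : Fin n ≃ H) (pref : Fin n → H → H → Prop)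
    (S : Finset (Fin n)) : Finset (Fin n) :=
  S.filter fun i => ∃ k, 0 < k ∧ (fun j => point w (pref j) S j)^[k] i = i

/-- Top trading cycles on strict preferences, fuel-based recursion: in each round all
current trading cycles are executed and their agents removed. -/
noncomputable def TTCaux (w : Fin n ≃ H) (pref : Fin n → H → H → Prop) :
    ℕ → Finset (Fin n) → Fin n → H
  | 0, _, i => w i
  | fuel + 1, S, i =>
      if i ∈ cycleAgents w pref S then w (point w (pref i) S i)
      else TTCaux w pref fuel (S \ cycleAgents w pref S) i

/-- Gale's top trading cycles algorithm for a strict preference profile. -/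
noncomputable def TTCstrict (w : Fin n ≃ H) (pref : Fin n → H → H → Prop) : Fin n → H :=
  TTCaux w pref n Finset.univ

/-- Round (executed-cycle index, starting from 1) at which an agent is assigned. -/
noncomputable def TTCroundAux (w : Fin n ≃ H) (pref : Fin n → H → H → Prop) :
    ℕ → Finset (Fin n) → Fin n → ℕ
  | 0, _, _ => 1
  | fuel + 1, S, i =>
      if i ∈ cycleAgents w pref S then 1
      else TTCroundAux w pref fuel (S \ cycleAgents w pref S) i + 1

/-- TTC with fixed tie-breaking: `TTC_≻(R) = TTC(R_≻)`. -/
noncomputable def TTCtb (w : Fin n ≃ H) (R : Fin n → WeakOrder H)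
    (tb : Fin n → Fin n → Fin n → Prop) : Fin n → H :=
  TTCstrict w fun i => tieBroken w (R i) (tb i)

/-- The round in which agent `i` is assigned under `TTC_≻(R)`. -/
noncomputable def TTCtbRound (w : Fin n ≃ H) (R : Fin n → WeakOrder H)
    (tb : Fin n → Fin n → Fin n → Prop) (i : Fin n) : ℕ :=
  TTCroundAux w (fun a => tieBroken w (R a) (tb a)) n Finset.univ i

/-- Objective indifferences w.r.t. the partition of `H` into the fibers of `blk`:
indifference holds exactly between houses in the same block. -/
def ObjInd (blk : H → B) (R : WeakOrder H) : Prop :=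
  ∀ a b, R.I a b ↔ blk a = blk b

/-- `x` is blocked: some coalition `Q` can reallocate its own endowments making
all its members weakly better off and one strictly better off. -/
def Blocks (w : Fin n ≃ H) (R : Fin n → WeakOrder H) (x : Fin n → H) : Prop :=
  ∃ (Q : Finset (Fin n)) (y : Fin n ≃ H),
    Q.image (⇑y) = Q.image (⇑w) ∧
    (∀ i ∈ Q, (R i).rel (y i) (x i)) ∧
    ∃ i ∈ Q, (R i).P (y i) (x i)

/-- `x` is weakly blocked: some nonempty coalition can reallocate its own
endowments making all of its members strictly better off. -/
def WeaklyBlocks (w : Fin n ≃ H) (R : Fin n → WeakOrder H) (x : Fin n → H) : Prop :=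
  ∃ Q : Finset (Fin n), Q.Nonempty ∧ ∃ y : Fin n ≃ H,
    Q.image (⇑y) = Q.image (⇑w) ∧ ∀ i ∈ Q, (R i).P (y i) (x i)

/-- `y` Pareto dominates `x`. -/
def ParetoDom (R : Fin n → WeakOrder H) (y x : Fin n → H) : Prop :=
  (∀ i, (R i).rel (y i) (x i)) ∧ ∃ i, (R i).P (y i) (x i)

end Defs

section Aux
variable {n : ℕ} {H : Type*}

private lemma rel_refl (R : WeakOrder H) (a : H) : R.rel a a := (R.total a a).elim id id

private lemma exists_max (w : Fin n ≃ H) (p : H → H → Prop)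
    (htot : ∀ a b : H, a ≠ b → p a b ∨ p b a)
    (htrans : ∀ a b c, p a b → p b c → p a c)
    (S : Finset (Fin n)) :
    S.Nonempty → ∃ m ∈ S, ∀ l ∈ S, l = m ∨ p (w m) (w l) := by
  classical
  induction S using Finset.induction_on with
  | empty => rintro ⟨x, hx⟩; exact absurd hx (Finset.notMem_empty x)
  | @insert a S haS ih =>
    intro _
    rcases S.eq_empty_or_nonempty with rfl | hS
    · exact ⟨a, by simp, by simp⟩
    · obtain ⟨m, hmS, hm⟩ := ih hS
      have ham : a ≠ m := fun h => haS (h ▸ hmS)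
      rcases htot (w a) (w m) (fun h => ham (w.injective h)) with h1 | h1
      · refine ⟨a, Finset.mem_insert_self _ _, ?_⟩
        intro l hl
        rcases Finset.mem_insert.mp hl with rfl | hl
        · exact Or.inl rfl
        · rcases hm l hl with rfl | h2
          · exact Or.inr h1
          · exact Or.inr (htrans _ _ _ h1 h2)
      · refine ⟨m, Finset.mem_insert_of_mem hmS, ?_⟩
        intro l hl
        rcases Finset.mem_insert.mp hl with rfl | hl
        · exact Or.inr h1
        · exact hm l hl

private lemma point_eq_max (w : Fin n ≃ H) (p : H → H → Prop)
    (hasym : ∀ a b : H, p a b → ¬ p b a)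
    {S : Finset (Fin n)} {m : Fin n} (hmS : m ∈ S)
    (hm : ∀ l ∈ S, l = m ∨ p (w m) (w l)) (i : Fin n) :
    point w p S i = m := by
  classical
  have hmem : m ∈ S.filter fun m' => ∀ j ∈ S, j = m' ∨ p (w m') (w j) :=
    Finset.mem_filter.mpr ⟨hmS, hm⟩
  have hne : (S.filter fun m' => ∀ j ∈ S, j = m' ∨ p (w m') (w j)).Nonempty := ⟨m, hmem⟩
  unfold point
  rw [dif_pos hne]
  have hmin := Finset.min'_mem _ hne
  rcases Finset.mem_filter.mp hmin with ⟨hS', hprop⟩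
  by_contra hne'
  rcases hm _ hS' with h1 | h1
  · exact hne' h1
  rcases hprop m hmS with h2 | h2
  · exact hne' h2.symm
  · exact hasym _ _ h1 h2

private lemma TTCaux_eq_w (w : Fin n ≃ H) (pref : Fin n → H → H → Prop)
    (hfix : ∀ S i, i ∈ cycleAgents w pref S → point w (pref i) S i = i) :
    ∀ fuel S i, TTCaux w pref fuel S i = w i := by
  intro fuel
  induction fuel with
  | zero => intro S i; rfl
  | succ f ih =>
    intro S i
    simp only [TTCaux]
    split
    · next h => rw [hfix S i h]
    · exact ih _ _

private lemma twoGroup_fix (w : Fin n ≃ H) (A : Fin n → Prop)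
    (p q : H → H → Prop) (pref : Fin n → H → H → Prop)
    (hpA : ∀ i, A i → pref i = p) (hqB : ∀ i, ¬ A i → pref i = q)
    (hp_tot : ∀ a b : H, a ≠ b → p a b ∨ p b a)
    (hp_asym : ∀ a b : H, p a b → ¬ p b a)
    (hp_trans : ∀ a b c : H, p a b → p b c → p a c)
    (hq_tot : ∀ a b : H, a ≠ b → q a b ∨ q b a)
    (hq_asym : ∀ a b : H, q a b → ¬ q b a)
    (hq_trans : ∀ a b c : H, q a b → q b c → q a c)
    (HA : ∀ i j, A i → ¬ A j → p (w i) (w j)) :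
    ∀ S i, i ∈ cycleAgents w pref S → point w (pref i) S i = i := by
  classical
  intro S i hi
  simp only [cycleAgents, Finset.mem_filter] at hi
  obtain ⟨hiS, k, hk, hik⟩ := hi
  set f : Fin n → Fin n := fun j => point w (pref j) S j with hfdef
  have hS : S.Nonempty := ⟨i, hiS⟩
  obtain ⟨ma, hmaS, hma⟩ := exists_max w p hp_tot hp_trans S hS
  obtain ⟨mb, hmbS, hmb⟩ := exists_max w q hq_tot hq_trans S hS
  have hfa : ∀ j, A j → f j = ma := by
    intro j hj
    show point w (pref j) S j = ma
    rw [hpA j hj]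
    exact point_eq_max w p hp_asym hmaS hma j
  have hfb : ∀ j, ¬ A j → f j = mb := by
    intro j hj
    show point w (pref j) S j = mb
    rw [hqB j hj]
    exact point_eq_max w q hq_asym hmbS hmb j
  -- if the p-max owner is not in A, then no agent of S is in A
  have hAS : ¬ A ma → ∀ j ∈ S, ¬ A j := by
    intro hma' j hjS hAj
    have hne : j ≠ ma := fun h => hma' (h ▸ hAj)
    have h1 : p (w ma) (w j) := (hma j hjS).resolve_left hne
    exact hp_asym _ _ h1 (HA j ma hAj hma')
  have hfix2 : ∀ j, f (f (f j)) = f (f j) := by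
    intro j
    by_cases hAj : A j
    · rw [hfa j hAj]
      by_cases hAma : A ma
      · rw [hfa ma hAma, hfa ma hAma]
      · rw [hfb ma hAma, hfb mb (hAS hAma mb hmbS)]
    · rw [hfb j hAj]
      by_cases hAmb : A mb
      · have hAma : A ma := by
          by_contra h; exact hAS h mb hmbS hAmb
        rw [hfa mb hAmb, hfa ma hAma]
      · rw [hfb mb hAmb, hfb mb hAmb]
  have hK : f^[k + k] i = i := by
    rw [Function.iterate_add_apply, hik, hik]
  obtain ⟨m, hmeq⟩ : ∃ m, k + k = m + 1 + 1 := ⟨k + k - 2, by omega⟩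
  rw [hmeq, Function.iterate_succ_apply', Function.iterate_succ_apply'] at hK
  have hfi : f i = i := by
    conv_lhs => rw [← hK]
    rw [hfix2, hK]
  exact hfi

private lemma tieBroken_total (w : Fin n ≃ H) (R : WeakOrder H) (lt : Fin n → Fin n → Prop)
    (hlt : IsTieBreak lt) :
    ∀ a b : H, a ≠ b → tieBroken w R lt a b ∨ tieBroken w R lt b a := by
  intro a b hab
  by_cases h1 : R.rel a b <;> by_cases h2 : R.rel b a
  · rcases hlt.1 (w.symm a) (w.symm b) (fun h => hab (w.symm.injective h)) with h | h
    · exact Or.inl (Or.inr ⟨⟨h1, h2⟩, h⟩)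
    · exact Or.inr (Or.inr ⟨⟨h2, h1⟩, h⟩)
  · exact Or.inl (Or.inl ⟨h1, h2⟩)
  · exact Or.inr (Or.inl ⟨h2, h1⟩)
  · exact absurd (R.total a b) (by tauto)

private lemma tieBroken_asym (w : Fin n ≃ H) (R : WeakOrder H) (lt : Fin n → Fin n → Prop)
    (hlt : IsTieBreak lt) :
    ∀ a b : H, tieBroken w R lt a b → ¬ tieBroken w R lt b a := by
  rintro a b (h | h) (h' | h')
  · exact h.2 h'.1
  · exact h.2 h'.1.1
  · exact h'.2 h.1.1
  · exact hlt.2.2 _ (hlt.2.1 h.2 h'.2)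

private lemma tieBroken_trans (w : Fin n ≃ H) (R : WeakOrder H) (lt : Fin n → Fin n → Prop)
    (hlt : IsTieBreak lt) :
    ∀ a b c : H, tieBroken w R lt a b → tieBroken w R lt b c → tieBroken w R lt a c := by
  rintro a b c (h | h) (h' | h')
  · refine Or.inl ⟨R.trans _ _ _ h.1 h'.1, fun hc => h.2 (R.trans _ _ _ h'.1 hc)⟩
  · refine Or.inl ⟨R.trans _ _ _ h.1 h'.1.1, fun hc => h.2 (R.trans _ _ _ h'.1.1 hc)⟩
  · refine Or.inl ⟨R.trans _ _ _ h.1.1 h'.1, fun hc => h'.2 (R.trans _ _ _ hc h.1.1)⟩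
  · exact Or.inr ⟨⟨R.trans _ _ _ h.1.1 h'.1.1, R.trans _ _ _ h'.1.2 h.1.2⟩,
      hlt.2.1 h.2 h'.2⟩

end Aux

/-- if a domain `𝓡` is not contained in any objective indifferences
domain (it contains `R_α, R_β` with `h₁ I_α h₂` but `h₁ P_β h₂`), then there are a
profile from `𝓡` and a tie-breaking profile for which `TTC_≻(R)` is Pareto
dominated; so objective indifferences domains are the maximal domains on which all
`TTC_≻` mechanisms are Pareto efficient. -/
theorem TTCtb_not_paretoEfficient_beyond_objInd {n : ℕ} {H : Type*} (hn : 2 ≤ n)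
    (w : Fin n ≃ H) (𝓡 : Set (WeakOrder H)) (Rα Rβ : WeakOrder H)
    (hα : Rα ∈ 𝓡) (hβ : Rβ ∈ 𝓡) (h1 h2 : H) (hI : Rα.I h1 h2) (hP : Rβ.P h1 h2) :
    ∃ R : Fin n → WeakOrder H, (∀ i, R i ∈ 𝓡) ∧
      ∃ tb : Fin n → Fin n → Fin n → Prop, (∀ i, IsTieBreak (tb i)) ∧
        ∃ y : Fin n ≃ H, ParetoDom R (⇑y) (TTCtb w R tb) := by
  classical
  have hne : h1 ≠ h2 := by rintro rfl; exact hP.2 hP.1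
  set i2 : Fin n := w.symm h2 with hi2
  set lt0 : Fin n → Fin n → Prop :=
    fun a b => (b = i2 ∧ a ≠ i2) ∨ (a ≠ i2 ∧ b ≠ i2 ∧ a < b) with hlt0
  set lt2 : Fin n → Fin n → Prop := fun a b => a < b with hlt2
  have hTB0 : IsTieBreak lt0 := by
    refine ⟨?_, ?_, ?_⟩
    · intro a b hab
      by_cases ha : a = i2
      · subst ha; exact Or.inr (Or.inl ⟨rfl, hab.symm⟩)
      · by_cases hb : b = i2
        · exact Or.inl (Or.inl ⟨hb, ha⟩)
        · rcases lt_or_gt_of_ne hab with h | h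
          · exact Or.inl (Or.inr ⟨ha, hb, h⟩)
          · exact Or.inr (Or.inr ⟨hb, ha, h⟩)
    · rintro a b c (⟨rfl, ha⟩ | ⟨ha, hb, hab⟩) hbc
      · rcases hbc with ⟨_, h⟩ | ⟨h, _⟩ <;> exact absurd rfl h
      · rcases hbc with ⟨rfl, _⟩ | ⟨_, hc, hbc⟩
        · exact Or.inl ⟨rfl, ha⟩
        · exact Or.inr ⟨ha, hc, hab.trans hbc⟩
    · rintro a (⟨rfl, h⟩ | ⟨_, _, h⟩)
      · exact h rfl
      · exact lt_irrefl _ h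
  have hTB2 : IsTieBreak lt2 := by
    refine ⟨fun a b hab => lt_or_gt_of_ne hab, fun a b c h h' => h.trans h', fun a => lt_irrefl a⟩
  set A : Fin n → Prop := fun i => Rα.rel (w i) h2 ∧ w i ≠ h2 with hA
  set R : Fin n → WeakOrder H := fun i => if A i then Rα else Rβ with hR
  set tb : Fin n → Fin n → Fin n → Prop := fun i => if A i then lt0 else lt2 with htb
  set p : H → H → Prop := tieBroken w Rα lt0 with hp
  set q : H → H → Prop := tieBroken w Rβ lt2 with hq
  have hprefA : ∀ i, A i → (fun a => tieBroken w (R a) (tb a)) i = p := by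
    intro i hAi; simp only [hR, htb, if_pos hAi]; rfl
  have hprefB : ∀ i, ¬ A i → (fun a => tieBroken w (R a) (tb a)) i = q := by
    intro i hAi; simp only [hR, htb, if_neg hAi]; rfl
  have HA : ∀ i j, A i → ¬ A j → p (w i) (w j) := by
    intro i j hAi hAj
    by_cases hj2 : w j = h2
    · by_cases hrel : Rα.rel h2 (w i)
      · refine Or.inr ⟨⟨hj2 ▸ hAi.1, hj2 ▸ hrel⟩, ?_⟩
        simp only [Equiv.symm_apply_apply]
        left
        refine ⟨?_, fun h => hAi.2 (by rw [h, hi2]; exact w.apply_symm_apply h2)⟩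
        · rw [hi2, ← hj2, Equiv.symm_apply_apply]
      · exact Or.inl ⟨hj2 ▸ hAi.1, fun hc => hrel (hj2 ▸ hc)⟩
    · have hnrel : ¬ Rα.rel (w j) h2 := fun hr => hAj ⟨hr, hj2⟩
      have hrel : Rα.rel h2 (w j) := (Rα.total _ _).resolve_left hnrel
      exact Or.inl ⟨Rα.trans _ _ _ hAi.1 hrel,
        fun hc => hnrel (Rα.trans _ _ _ hc hAi.1)⟩
  have hxw : ∀ i, TTCtb w R tb i = w i := by
    intro i
    have hfix := twoGroup_fix w A p q (fun a => tieBroken w (R a) (tb a)) hprefA hprefB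
      (tieBroken_total w Rα lt0 hTB0) (tieBroken_asym w Rα lt0 hTB0)
      (tieBroken_trans w Rα lt0 hTB0)
      (tieBroken_total w Rβ lt2 hTB2) (tieBroken_asym w Rβ lt2 hTB2)
      (tieBroken_trans w Rβ lt2 hTB2) HA
    exact TTCaux_eq_w w _ hfix n Finset.univ i
  have hwi2 : w i2 = h2 := by rw [hi2]; exact w.apply_symm_apply h2
  have hAi2 : ¬ A i2 := fun h => h.2 hwi2
  refine ⟨R, ?_, tb, ?_, w.trans (Equiv.swap h1 h2), ?_, ⟨i2, ?_⟩⟩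
  · intro i
    by_cases h : A i
    · rw [hR]; simp only [if_pos h]; exact hα
    · rw [hR]; simp only [if_neg h]; exact hβ
  · intro i
    by_cases h : A i
    · rw [htb]; simp only [if_pos h]; exact hTB0
    · rw [htb]; simp only [if_neg h]; exact hTB2
  · intro i
    rw [hxw i]
    have hy : (w.trans (Equiv.swap h1 h2)) i = Equiv.swap h1 h2 (w i) := rfl
    rw [hy]
    by_cases h1i : w i = h1
    · rw [h1i, Equiv.swap_apply_left]
      have hAi : A i := ⟨h1i ▸ hI.1, h1i ▸ hne⟩
      rw [hR]; simp only [if_pos hAi]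
      exact hI.2
    · by_cases h2i : w i = h2
      · rw [h2i, Equiv.swap_apply_right]
        have hAi : ¬ A i := fun h => h.2 h2i
        rw [hR]; simp only [if_neg hAi]
        exact hP.1
      · rw [Equiv.swap_apply_of_ne_of_ne h1i h2i]
        exact rel_refl _ _
  · rw [hxw i2]
    have hy : (w.trans (Equiv.swap h1 h2)) i2 = Equiv.swap h1 h2 (w i2) := rfl
    rw [hy, hwi2, Equiv.swap_apply_right]
    rw [hR]; simp only [if_neg hAi2]
    exact hP

end ShapleyScarf
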